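/- Let f = (x² + y²)³ + (y³ + z³)² ∈ S, and set ρ₁ = (yz², −xz², xy²) and ρ₂ = (y³z² + z⁵, 0, −x⁵ − 2x³y² − xy⁴). Then: (i) ρ₁ and ρ₂ are syzygies of f, of degrees 3 and 5 respectively; (ii) every syzygy of f of degree j ≤ 4 is of the form g·ρ₁ for a (unique) g ∈ S_{j−3}; and (iii) ρ₂ is not a polynomial multiple of ρ₁. -/

import Mathlib

open MvPolynomial

noncomputable section

abbrev P3 : Type := MvPolynomial (Fin 3) ℂ

abbrev X0 : P3 := X 0
abbrev X1 : P3 := X 1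
abbrev X2 : P3 := X 2

/-- The graded piece `S_j` of `S = ℂ[x,y,z]`, with `S_j = 0` for `j < 0`. -/
def homZ (j : ℤ) : Submodule ℂ P3 :=
  if 0 ≤ j then homogeneousSubmodule (Fin 3) ℂ j.toNat else ⊥

/-- The Jacobian ideal of `f`. -/
def Jf (f : P3) : Ideal P3 :=
  Ideal.span {pderiv 0 f, pderiv 1 f, pderiv 2 f}

/-- The space of syzygies `(a,b,c) ∈ S_{q-2}³` of `f` whose divergence lies in the
Jacobian ideal: the representatives of `E₂^{1-t,t}(f)_k`, where `q = t·d + k`. -/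
def E2Z (f : P3) (q : ℤ) : Submodule ℂ (P3 × P3 × P3) where
  carrier := {v | v.1 ∈ homZ (q - 2) ∧ v.2.1 ∈ homZ (q - 2) ∧ v.2.2 ∈ homZ (q - 2) ∧
    v.1 * pderiv 0 f + v.2.1 * pderiv 1 f + v.2.2 * pderiv 2 f = 0 ∧
    pderiv 0 v.1 + pderiv 1 v.2.1 + pderiv 2 v.2.2 ∈ Jf f}
  zero_mem' := by
    exact ⟨zero_mem _, zero_mem _, zero_mem _, by simp, by simp⟩
  add_mem' := by
    rintro a b ⟨ha1, ha2, ha3, ha4, ha5⟩ ⟨hb1, hb2, hb3, hb4, hb5⟩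
    refine ⟨add_mem ha1 hb1, add_mem ha2 hb2, add_mem ha3 hb3,
      by simp only [Prod.fst_add, Prod.snd_add]; linear_combination ha4 + hb4, ?_⟩
    have h : pderiv (0 : Fin 3) (a.1 + b.1) + pderiv 1 (a.2.1 + b.2.1)
        + pderiv 2 (a.2.2 + b.2.2)
        = (pderiv 0 a.1 + pderiv 1 a.2.1 + pderiv 2 a.2.2)
          + (pderiv 0 b.1 + pderiv 1 b.2.1 + pderiv 2 b.2.2) := by
      simp only [map_add]; ring
    simpa only [Prod.fst_add, Prod.snd_add, h] using add_mem ha5 hb5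
  smul_mem' := by
    rintro c a ⟨ha1, ha2, ha3, ha4, ha5⟩
    refine ⟨Submodule.smul_mem _ c ha1, Submodule.smul_mem _ c ha2,
      Submodule.smul_mem _ c ha3, ?_, ?_⟩
    · simp only [Prod.smul_fst, Prod.smul_snd, smul_mul_assoc, ← smul_add, ha4, smul_zero]
    · have h : pderiv (0 : Fin 3) (c • a.1) + pderiv 1 (c • a.2.1) + pderiv 2 (c • a.2.2)
          = C c * (pderiv 0 a.1 + pderiv 1 a.2.1 + pderiv 2 a.2.2) := by
        simp only [smul_eq_C_mul, pderiv_C_mul]; ring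
      simpa only [Prod.smul_fst, Prod.smul_snd, h] using Ideal.mul_mem_left _ _ ha5

/-- The space of Koszul syzygies of `f` of degree `q` (i.e. `(df ∧ Ω¹)_q`),
coming from `P, Q, R ∈ S_{q-d-1}` where `d = deg f`. -/
def KZ (f : P3) (d q : ℤ) : Submodule ℂ (P3 × P3 × P3) :=
  Submodule.span ℂ {v | ∃ Pp Qq Rr : P3, Pp ∈ homZ (q - d - 1) ∧ Qq ∈ homZ (q - d - 1) ∧
    Rr ∈ homZ (q - d - 1) ∧
    v = (Rr * pderiv 1 f - Qq * pderiv 2 f,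
         Pp * pderiv 2 f - Rr * pderiv 0 f,
         Qq * pderiv 0 f - Pp * pderiv 1 f)}

/-- The term `E₂^{1-t,t}(f)_k` of the second page of Dimca's Koszul-de Rham spectral
sequence, where `q = t·d + k`: syzygies of degree `q-2` with divergence in the Jacobian
ideal, modulo Koszul syzygies. -/
abbrev E2Q (f : P3) (d q : ℤ) :=
  E2Z f q ⧸ (KZ f d q).comap (E2Z f q).subtype


section Helpers

lemma not_dvd_of_eval' {p q : P3} (s : Fin 3 → ℂ) (hp : eval s p = 0) (hq : eval s q ≠ 0) :
    ¬ p ∣ q := by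
  rintro ⟨t, rfl⟩
  rw [map_mul, hp, zero_mul] at hq
  exact hq rfl

lemma ne_zero_of_eval' {p : P3} (s : Fin 3 → ℂ) (h : eval s p ≠ 0) : p ≠ 0 := by
  rintro rfl; simp at h

lemma peel' {Pl w B R : P3} (hP : Prime Pl) (hw : ¬ Pl ∣ w) (h : B * w = Pl * R) :
    ∃ B', B = Pl * B' ∧ B' * w = R := by
  rcases hP.2.2 B w ⟨R, h⟩ with hB | hw'
  · obtain ⟨B', rfl⟩ := hB
    exact ⟨B', rfl, mul_left_cancel₀ hP.ne_zero (by linear_combination h)⟩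
  · exact absurd hw' hw

lemma primeX0' : Prime (X0) := by
  rw [← MulEquiv.prime_iff (finSuccEquiv ℂ 2).toMulEquiv]
  have h : (finSuccEquiv ℂ 2).toMulEquiv (X 0) = Polynomial.X := by
    simp [finSuccEquiv_X_zero]
  rw [h]
  exact Polynomial.prime_X

lemma primeX' (i : Fin 3) : Prime (X i : P3) := by
  have h := (MulEquiv.prime_iff (renameEquiv ℂ (Equiv.swap (0 : Fin 3) i)).toMulEquiv).mpr primeX0'
  have h2 : (renameEquiv ℂ (Equiv.swap (0 : Fin 3) i)).toMulEquiv (X 0 : P3) = X i := by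
    simp [renameEquiv_apply, rename_X]
  rwa [h2] at h

/-- The automorphism `x ↦ x + c y`. -/
def psiAut (c : ℂ) : P3 ≃ₐ[ℂ] P3 :=
  AlgEquiv.ofAlgHom (aeval ![X0 + C c * X1, X1, X2]) (aeval ![X0 - C c * X1, X1, X2])
    (by apply MvPolynomial.algHom_ext; intro i; fin_cases i <;> simp [aeval_X])
    (by apply MvPolynomial.algHom_ext; intro i; fin_cases i <;> simp [aeval_X])

lemma psiAut_X0 (c : ℂ) : psiAut c (X 0) = X0 + C c * X1 := by
  simp [psiAut, AlgEquiv.ofAlgHom, aeval_X]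

lemma prime_lin' (c : ℂ) : Prime (X0 + C c * X1) := by
  have h := (MulEquiv.prime_iff (psiAut c).toMulEquiv).mpr (primeX' 0)
  have h2 : (psiAut c).toMulEquiv (X 0 : P3) = X0 + C c * X1 := psiAut_X0 c
  rwa [h2] at h

/-- The substitution `z ↦ 0`. -/
def phzS : P3 →ₐ[ℂ] P3 := aeval ![X0, X1, 0]

lemma phz'_X0 : phzS X0 = X0 := by simp [phzS]
lemma phz'_X1 : phzS X1 = X1 := by simp [phzS]
lemma phz'_X2 : phzS X2 = 0 := by simp [phzS]

lemma X2_dvd_sub' (p : P3) : X2 ∣ p - phzS p := by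
  induction p using MvPolynomial.induction_on with
  | C a => simp [phzS]
  | add p q hp hq =>
      have h : p + q - phzS (p + q) = (p - phzS p) + (q - phzS q) := by
        rw [map_add]; ring
      rw [h]; exact dvd_add hp hq
  | mul_X p n hp =>
      have h : p * X n - phzS (p * X n)
          = (p - phzS p) * X n + phzS p * (X n - phzS (X n)) := by
        rw [map_mul]; ring
      rw [h]
      refine dvd_add (hp.mul_right _) ?_
      fin_cases n <;> simp [phzS]

lemma X2_dvd_iff' {p : P3} : X2 ∣ p ↔ phzS p = 0 := by
  constructor
  · rintro ⟨t, rfl⟩; rw [map_mul, phz'_X2, zero_mul]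
  · intro h
    have h2 := X2_dvd_sub' p
    rwa [h, sub_zero] at h2

lemma phz'_hom {p : P3} {n : ℕ} (h : p.IsHomogeneous n) : (phzS p).IsHomogeneous n := by
  have h2 := h.aeval (![X0, X1, 0] : Fin 3 → P3) (n := 1) ?_
  · simpa [phzS] using h2
  · intro i; fin_cases i
    · exact isHomogeneous_X _ _
    · exact isHomogeneous_X _ _
    · exact isHomogeneous_zero _ _ _

lemma hom_quot' {m q : P3} {k n : ℕ} (hm : m ≠ 0) (hmk : m.IsHomogeneous k)
    (h : (m * q).IsHomogeneous n) :
    q.IsHomogeneous (n - k) ∧ (n < k → q = 0) := by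
  have key : ∀ d : ℕ, k + d ≠ n → homogeneousComponent d q = 0 := by
    intro d hkd
    have h1 : homogeneousComponent (k + d) (m * q) = 0 := by
      rw [homogeneousComponent_of_mem ((mem_homogeneousSubmodule _ _).mpr h),
        if_neg hkd]
    have h2 : m * q = ∑ d' ∈ Finset.range (q.totalDegree + 1),
        m * homogeneousComponent d' q := by
      rw [← Finset.mul_sum, sum_homogeneousComponent]
    rw [h2, map_sum] at h1
    have h3 : ∀ d' ∈ Finset.range (q.totalDegree + 1),
        homogeneousComponent (k + d) (m * homogeneousComponent d' q)
        = if k + d = k + d' then m * homogeneousComponent d' q else 0 := by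
      intro d' _
      exact homogeneousComponent_of_mem ((mem_homogeneousSubmodule _ _).mpr
        (hmk.mul (homogeneousComponent_isHomogeneous d' q)))
    rw [Finset.sum_congr rfl h3] at h1
    by_cases hd : d ∈ Finset.range (q.totalDegree + 1)
    · rw [Finset.sum_eq_single_of_mem d hd] at h1
      · rw [if_pos rfl] at h1
        rcases mul_eq_zero.mp h1 with h' | h'
        · exact absurd h' hm
        · exact h'
      · intro b _ hb
        rw [if_neg (by omega)]
    · exact homogeneousComponent_eq_zero _ q (by simpa [Nat.lt_succ_iff] using hd)
  have hqe : n < k → q = 0 := by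
    intro hnk
    conv_lhs => rw [← sum_homogeneousComponent q]
    exact Finset.sum_eq_zero fun d _ => key d (by omega)
  rcases lt_or_ge n k with hnk | hkn
  · exact ⟨hqe hnk ▸ isHomogeneous_zero _ _ _, hqe⟩
  · have hq : q = homogeneousComponent (n - k) q := by
      conv_lhs => rw [← sum_homogeneousComponent q]
      by_cases hd : n - k ∈ Finset.range (q.totalDegree + 1)
      · exact Finset.sum_eq_single_of_mem _ hd fun b _ hb => key b (by omega)
      · simp only [Finset.mem_range, Nat.lt_succ_iff, not_le] at hd
        rw [homogeneousComponent_eq_zero _ q (by omega)]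
        exact Finset.sum_eq_zero fun d hdm => key d
          (by simp only [Finset.mem_range, Nat.lt_succ_iff] at hdm; omega)
    exact ⟨hq ▸ homogeneousComponent_isHomogeneous _ _, hqe⟩

end Helpers

set_option maxHeartbeats 2000000 in
lemma main_syz (j : ℕ) (hj : j ≤ 4) (a b c : P3) (ha : a.IsHomogeneous j)
    (hb : b.IsHomogeneous j) (hc : c.IsHomogeneous j)
    (hsyz : (a*X0 + b*X1) * (X0^2+X1^2)^2 + (b*X1^2 + c*X2^2) * (X1^3+X2^3) = 0) :
    ∃ g : P3, g.IsHomogeneous (j - 3) ∧ (j < 3 → g = 0) ∧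
      a = g * (X1*X2^2) ∧ b = -(g * (X0*X2^2)) ∧ c = g * (X0*X1^2) := by
  have hI2 : (C Complex.I : P3) * C Complex.I = -1 := by
    rw [← map_mul, Complex.I_mul_I, map_neg, map_one]
  set Pl : P3 := X0 + C Complex.I * X1 with hPl_def
  set Ql : P3 := X0 - C Complex.I * X1 with hQl_def
  have hPl : Prime Pl := prime_lin' _
  have hQl : Prime Ql := by
    have h := prime_lin' (-Complex.I)
    have : X0 + C (-Complex.I) * X1 = Ql := by rw [map_neg]; ring
    rwa [this] at h
  have hu2 : ((X0^2+X1^2)^2 : P3) = Pl^2 * Ql^2 := by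
    have : Pl * Ql = X0^2 - (C Complex.I * C Complex.I) * X1^2 := by ring
    rw [hI2] at this
    calc ((X0^2+X1^2)^2 : P3) = (X0^2 - (-1) * X1^2)^2 := by ring
    _ = (Pl * Ql)^2 := by rw [this]
    _ = Pl^2 * Ql^2 := by ring
  have hPw : ¬ Pl ∣ (X1^3 + X2^3 : P3) := by
    apply not_dvd_of_eval' ![-Complex.I, 1, 1] <;> simp [hPl_def]
  have hQw : ¬ Ql ∣ (X1^3 + X2^3 : P3) := by
    apply not_dvd_of_eval' ![Complex.I, 1, 1] <;> simp [hQl_def]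
  -- peel' u² = Pl²Ql² off the syzygy
  obtain ⟨B1, hB1, h1⟩ := peel' hPl hPw
    (show (b*X1^2 + c*X2^2) * (X1^3+X2^3)
        = Pl * (-(a*X0 + b*X1) * Pl * Ql^2) by linear_combination hsyz - (a*X0+b*X1) * hu2)
  obtain ⟨B2, hB2, h2⟩ := peel' hPl hPw
    (show B1 * (X1^3+X2^3) = Pl * (-(a*X0 + b*X1) * Ql^2) by linear_combination h1)
  obtain ⟨B3, hB3, h3⟩ := peel' hQl hQw
    (show B2 * (X1^3+X2^3) = Ql * (-(a*X0 + b*X1) * Ql) by linear_combination h2)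
  obtain ⟨B4, hB4, h4⟩ := peel' hQl hQw
    (show B3 * (X1^3+X2^3) = Ql * (-(a*X0 + b*X1)) by linear_combination h3)
  -- resulting equations
  obtain ⟨pp, hpp_def⟩ : ∃ pp : P3, pp = -B4 := ⟨-B4, rfl⟩
  have eq1 : a*X0 + b*X1 = pp * (X1^3+X2^3) := by
    linear_combination h4 - (X1^3+X2^3) * hpp_def
  have eq2 : b*X1^2 + c*X2^2 = -(pp * (X0^2+X1^2)^2) := by
    linear_combination hB1 + Pl * hB2 + Pl^2 * hB3 + Pl^2*Ql*hB4 - B4 * hu2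
      + (X0^2+X1^2)^2 * hpp_def
  -- homogeneity of pp
  have hu2ne : ((X0^2+X1^2)^2 : P3) ≠ 0 := ne_zero_of_eval' ![1,0,0] (by simp)
  have hu2hom : ((X0^2+X1^2)^2 : P3).IsHomogeneous 4 := by
    have h2 : ((X0^2+X1^2) : P3).IsHomogeneous 2 :=
      (isHomogeneous_X_pow _ _).add (isHomogeneous_X_pow _ _)
    exact h2.pow 2
  have hBhom : (b*X1^2 + c*X2^2).IsHomogeneous (j+2) :=
    (hb.mul (isHomogeneous_X_pow _ 2)).add (hc.mul (isHomogeneous_X_pow _ 2))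
  have hprod : (((X0^2+X1^2)^2 : P3) * (-pp)).IsHomogeneous (j+2) := by
    rw [show ((X0^2+X1^2)^2 : P3) * (-pp) = b*X1^2 + c*X2^2 by linear_combination -eq2]
    exact hBhom
  have hpp_hom : pp.IsHomogeneous (j-2) := by
    have h' := (hom_quot' hu2ne hu2hom hprod).1.neg
    rw [neg_neg] at h'
    simpa [show j+2-4 = j-2 by omega] using h'
  -- apply phzS to the equations
  have h1φ : phzS a * X0 + phzS b * X1 = phzS pp * X1^3 := by
    have := congrArg phzS eq1
    simpa [map_add, map_mul, map_pow, phz'_X0, phz'_X1, phz'_X2] using this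
  have h2φ : phzS b * X1^2 = -(phzS pp * (X0^2+X1^2)^2) := by
    have := congrArg phzS eq2
    simpa [map_add, map_mul, map_pow, map_neg, phz'_X0, phz'_X1, phz'_X2] using this
  have hX1u : ¬ X1 ∣ ((X0^2+X1^2)^2 : P3) :=
    not_dvd_of_eval' ![1,0,0] (by simp) (by simp)
  obtain ⟨s1, hs1, hs1'⟩ := peel' (primeX' 1) hX1u
    (show phzS pp * (X0^2+X1^2)^2 = X1 * (-(phzS b) * X1) by linear_combination h2φ)
  obtain ⟨s, hs, hs'⟩ := peel' (primeX' 1) hX1u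
    (show s1 * (X0^2+X1^2)^2 = X1 * (-(phzS b)) by linear_combination hs1')
  have hX0s : ¬ X0 ∣ (X1^5 + (X0^2+X1^2)^2*X1 : P3) :=
    not_dvd_of_eval' ![0,1,0] (by simp) (by simp)
  obtain ⟨s', hs'2, _⟩ := peel' (primeX' 0) hX0s
    (show s * (X1^5 + (X0^2+X1^2)^2*X1) = X0 * (phzS a) by
      linear_combination -h1φ + X1 * hs' - X1^3 * hs1 - X1^4 * hs)
  -- phzS pp = 0
  have hfac : (X0*X1^2) * s' = phzS pp := by
    linear_combination -hs1 - X1*hs - X1^2*hs'2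
  have hXX2ne : (X0*X1^2 : P3) ≠ 0 := ne_zero_of_eval' ![1,1,1] (by simp)
  have hXX2hom : (X0*X1^2 : P3).IsHomogeneous 3 :=
    (isHomogeneous_X _ _).mul (isHomogeneous_X_pow _ 2)
  have hs'0 : s' = 0 := by
    have hq := hom_quot' hXX2ne hXX2hom
      (show ((X0*X1^2 : P3) * s').IsHomogeneous (j-2) by rw [hfac]; exact phz'_hom hpp_hom)
    exact hq.2 (by omega)
  have hφpp : phzS pp = 0 := by rw [← hfac, hs'0, mul_zero]
  obtain ⟨p2, hp2⟩ := X2_dvd_iff'.mpr hφpp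
  -- a and b divisible by X2
  have hX1sq : (X1^2 : P3) ≠ 0 := pow_ne_zero _ (X_ne_zero _)
  have hφb : phzS b = 0 := by
    rcases mul_eq_zero.mp (show phzS b * X1^2 = 0 by rw [h2φ, hφpp]; ring) with h | h
    · exact h
    · exact absurd h hX1sq
  obtain ⟨b2, hb2⟩ := X2_dvd_iff'.mpr hφb
  have hφa : phzS a = 0 := by
    rcases mul_eq_zero.mp (show phzS a * X0 = 0 by
      have := h1φ; rw [hφb, hφpp] at this; linear_combination this) with h | h
    · exact h
    · exact absurd h (X_ne_zero _)
  obtain ⟨a2, ha2⟩ := X2_dvd_iff'.mpr hφa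
  -- cancel one X2
  have hX2ne : (X2 : P3) ≠ 0 := X_ne_zero _
  have eq1' : a2*X0 + b2*X1 = p2*(X1^3+X2^3) := by
    apply mul_left_cancel₀ hX2ne
    linear_combination eq1 - X0*ha2 - X1*hb2 + (X1^3+X2^3)*hp2
  have eq2' : b2*X1^2 + c*X2 = -(p2*(X0^2+X1^2)^2) := by
    apply mul_left_cancel₀ hX2ne
    linear_combination eq2 - X1^2*hb2 - (X0^2+X1^2)^2*hp2
  -- p2 homogeneous of degree j-3
  have hp2hom : p2.IsHomogeneous (j-3) := by
    have hq := hom_quot' (X_ne_zero 2 : (X2:P3) ≠ 0) (isHomogeneous_X _ _)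
      (show ((X2:P3) * p2).IsHomogeneous (j-2) by rw [← hp2]; exact hpp_hom)
    simpa [show j-2-1 = j-3 by omega] using hq.1
  -- second round
  have h2φ' : phzS b2 * X1^2 = -(phzS p2 * (X0^2+X1^2)^2) := by
    have := congrArg phzS eq2'
    simpa [map_add, map_mul, map_pow, map_neg, phz'_X0, phz'_X1, phz'_X2] using this
  obtain ⟨σ1, hσ1, hσ1'⟩ := peel' (primeX' 1) hX1u
    (show phzS p2 * (X0^2+X1^2)^2 = X1 * (-(phzS b2) * X1) by linear_combination h2φ')
  obtain ⟨σ, hσ, hσ'⟩ := peel' (primeX' 1) hX1u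
    (show σ1 * (X0^2+X1^2)^2 = X1 * (-(phzS b2)) by linear_combination hσ1')
  have hX1sqne : (X1^2 : P3) ≠ 0 := hX1sq
  have hX1sqhom : (X1^2 : P3).IsHomogeneous 2 := isHomogeneous_X_pow _ 2
  have hσ0 : σ = 0 := by
    have hq := hom_quot' hX1sqne hX1sqhom
      (show ((X1^2 : P3) * σ).IsHomogeneous (j-3) by
        rw [show (X1^2:P3) * σ = phzS p2 by linear_combination -hσ1 - X1*hσ]
        exact phz'_hom hp2hom)
    exact hq.2 (by omega)
  have hφp2 : phzS p2 = 0 := by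
    rw [hσ1, hσ, hσ0, mul_zero, mul_zero]
  obtain ⟨p3, hp3⟩ := X2_dvd_iff'.mpr hφp2
  have hφb2 : phzS b2 = 0 := by
    have h0 : σ * (X0^2+X1^2)^2 = -(phzS b2) := hσ'
    rw [hσ0, zero_mul] at h0
    linear_combination h0
  obtain ⟨b3, hb3⟩ := X2_dvd_iff'.mpr hφb2
  have h1φ' : phzS a2 * X0 + phzS b2 * X1 = phzS p2 * X1^3 := by
    have := congrArg phzS eq1'
    simpa [map_add, map_mul, map_pow, phz'_X0, phz'_X1, phz'_X2] using this
  have hφa2 : phzS a2 = 0 := by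
    rcases mul_eq_zero.mp (show phzS a2 * X0 = 0 by
      rw [hφb2, hφp2] at h1φ'; linear_combination h1φ') with h | h
    · exact h
    · exact absurd h (X_ne_zero _)
  obtain ⟨a3, ha3⟩ := X2_dvd_iff'.mpr hφa2
  have eq1'' : a3*X0 + b3*X1 = p3*(X1^3+X2^3) := by
    apply mul_left_cancel₀ hX2ne
    linear_combination eq1' - X0*ha3 - X1*hb3 + (X1^3+X2^3)*hp3
  -- p3 = 0
  have hp3hom : p3.IsHomogeneous (j-4) ∧ (j-3 < 1 → p3 = 0) := by
    have hq := hom_quot' (X_ne_zero 2 : (X2:P3) ≠ 0) (isHomogeneous_X _ _)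
      (show ((X2:P3) * p3).IsHomogeneous (j-3) by rw [← hp3]; exact hp2hom)
    exact ⟨by simpa [show j-3-1 = j-4 by omega] using hq.1, hq.2⟩
  have hp30 : p3 = 0 := by
    rcases Nat.lt_or_ge j 4 with hj4 | hj4
    · exact hp3hom.2 (by omega)
    · have hj4' : j = 4 := by omega
      have h0 : p3.IsHomogeneous 0 := by simpa [hj4'] using hp3hom.1
      have hC : p3 = C (coeff 0 p3) := by
        have h1 := homogeneousComponent_of_mem ((mem_homogeneousSubmodule _ _).mpr h0)
          (m := 0)
        rw [if_pos rfl] at h1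
        calc p3 = homogeneousComponent 0 p3 := h1.symm
        _ = C (coeff 0 p3) := homogeneousComponent_zero _
      have hev := congrArg (eval ![(0:ℂ),0,1]) eq1''
      simp only [map_add, map_mul, map_pow, eval_X, Matrix.cons_val_zero, Matrix.cons_val_one,
        Matrix.head_cons, Matrix.cons_val_two, Matrix.tail_cons, mul_zero, zero_add, add_zero,
        mul_one, one_pow, zero_pow, ne_eq, OfNat.ofNat_ne_zero, not_false_iff] at hev
      have hc0 : coeff 0 p3 = 0 := by
        have := hev.symm
        rwa [hC, eval_C] at this
      rw [hC, hc0, map_zero]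
  have hpp0 : pp = 0 := by rw [hp2, hp3, hp30, mul_zero, mul_zero]
  -- final extraction
  have eq1z : a*X0 + b*X1 = 0 := by rw [eq1, hpp0, zero_mul]
  have eq2z : b*X1^2 + c*X2^2 = 0 := by rw [eq2, hpp0]; ring
  have hX2X1 : ¬ X2 ∣ (X1^2 : P3) := not_dvd_of_eval' ![0,1,0] (by simp) (by simp)
  obtain ⟨c1, hc1, hc1'⟩ := peel' (primeX' 2) hX2X1
    (show b * X1^2 = X2 * (-(c) * X2) by linear_combination eq2z)
  obtain ⟨b', hb', hb''⟩ := peel' (primeX' 2) hX2X1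
    (show c1 * X1^2 = X2 * (-(c)) by linear_combination hc1')
  have hX0w : ¬ X0 ∣ (X1*X2^2 : P3) := not_dvd_of_eval' ![0,1,1] (by simp) (by simp)
  obtain ⟨t, ht, ht'⟩ := peel' (primeX' 0) hX0w
    (show (-(b')) * (X1*X2^2) = X0 * a by
      linear_combination -eq1z + X1*hc1 + X1*X2*hb')
  refine ⟨t, ?_, ?_, ?_, ?_, ?_⟩
  · have hXwne : (X1*X2^2 : P3) ≠ 0 := ne_zero_of_eval' ![0,1,1] (by simp)
    have hXwhom : (X1*X2^2 : P3).IsHomogeneous 3 :=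
      (isHomogeneous_X _ _).mul (isHomogeneous_X_pow _ 2)
    exact (hom_quot' hXwne hXwhom (by rw [show (X1*X2^2:P3)*t = a from by linear_combination ht']; exact ha)).1
  · intro hj3
    have hXwne : (X1*X2^2 : P3) ≠ 0 := ne_zero_of_eval' ![0,1,1] (by simp)
    have hXwhom : (X1*X2^2 : P3).IsHomogeneous 3 :=
      (isHomogeneous_X _ _).mul (isHomogeneous_X_pow _ 2)
    exact (hom_quot' hXwne hXwhom (by rw [show (X1*X2^2:P3)*t = a from by linear_combination ht']; exact ha)).2 (by omega)
  · linear_combination -ht'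
  · linear_combination hc1 + X2*hb' - X2^2*ht
  · linear_combination hb'' + X1^2*ht

/-- For the Zariski sextic `f = (x²+y²)³ + (y³+z³)²`: `ρ₁, ρ₂` are syzygies of degrees
`3` and `5`, every syzygy of degree `j ≤ 4` is uniquely `g·ρ₁` with `g ∈ S_{j-3}`, and
`ρ₂` is not a polynomial multiple of `ρ₁`. -/
theorem stmt10 (f : P3) (hf : f = (X0 ^ 2 + X1 ^ 2) ^ 3 + (X1 ^ 3 + X2 ^ 3) ^ 2)
    (r1 r2 : P3 × P3 × P3)
    (hr1 : r1 = (X1 * X2 ^ 2, -(X0 * X2 ^ 2), X0 * X1 ^ 2))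
    (hr2 : r2 = (X1 ^ 3 * X2 ^ 2 + X2 ^ 5, 0,
      -(X0 ^ 5) - 2 * X0 ^ 3 * X1 ^ 2 - X0 * X1 ^ 4)) :
    (r1.1.IsHomogeneous 3 ∧ r1.2.1.IsHomogeneous 3 ∧ r1.2.2.IsHomogeneous 3) ∧
    (r2.1.IsHomogeneous 5 ∧ r2.2.1.IsHomogeneous 5 ∧ r2.2.2.IsHomogeneous 5) ∧
    (r1.1 * pderiv 0 f + r1.2.1 * pderiv 1 f + r1.2.2 * pderiv 2 f = 0) ∧ (r2.1 * pderiv 0 f + r2.2.1 * pderiv 1 f + r2.2.2 * pderiv 2 f = 0) ∧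
    (∀ j : ℕ, j ≤ 4 → ∀ v : P3 × P3 × P3,
      v.1.IsHomogeneous j → v.2.1.IsHomogeneous j → v.2.2.IsHomogeneous j →
      v.1 * pderiv 0 f + v.2.1 * pderiv 1 f + v.2.2 * pderiv 2 f = 0 →
      ∃! g : P3, g ∈ homZ ((j : ℤ) - 3) ∧ v = g • r1) ∧
    (¬ ∃ g : P3, r2 = g • r1) := by
  subst hf hr1 hr2
  have hfx : pderiv (0 : Fin 3) ((X0 ^ 2 + X1 ^ 2) ^ 3 + (X1 ^ 3 + X2 ^ 3) ^ 2)
      = 6*X0*(X0^2+X1^2)^2 := by simp [pderiv_X]; ring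
  have hfy : pderiv (1 : Fin 3) ((X0 ^ 2 + X1 ^ 2) ^ 3 + (X1 ^ 3 + X2 ^ 3) ^ 2)
      = 6*X1*(X0^2+X1^2)^2 + 6*X1^2*(X1^3+X2^3) := by simp [pderiv_X]; ring
  have hfz : pderiv (2 : Fin 3) ((X0 ^ 2 + X1 ^ 2) ^ 3 + (X1 ^ 3 + X2 ^ 3) ^ 2)
      = 6*X2^2*(X1^3+X2^3) := by simp [pderiv_X]; ring
  have hXwne : (X1*X2^2 : P3) ≠ 0 := ne_zero_of_eval' ![0,1,1] (by simp)
  refine ⟨⟨?_, ?_, ?_⟩, ⟨?_, ?_, ?_⟩, ?_, ?_, ?_, ?_⟩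
  · exact (isHomogeneous_X _ _).mul (isHomogeneous_X_pow _ 2)
  · exact ((isHomogeneous_X _ _).mul (isHomogeneous_X_pow _ 2)).neg
  · exact (isHomogeneous_X _ _).mul (isHomogeneous_X_pow _ 2)
  · exact ((isHomogeneous_X_pow _ 3).mul (isHomogeneous_X_pow _ 2)).add
      (isHomogeneous_X_pow _ 5)
  · exact isHomogeneous_zero _ _ _
  · have h2 : ((2:P3) * X0^3 * X1^2).IsHomogeneous 5 := by
      rw [show ((2:P3) * X0^3 * X1^2) = C (2:ℂ) * (X0^3 * X1^2) by
        rw [map_ofNat]; ring]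
      exact ((isHomogeneous_X_pow _ 3).mul (isHomogeneous_X_pow _ 2)).C_mul _
    exact ((isHomogeneous_X_pow _ 5).neg.sub h2).sub
      ((isHomogeneous_X _ _).mul (isHomogeneous_X_pow _ 4))
  · rw [hfx, hfy, hfz]; ring
  · rw [hfx, hfy, hfz]; ring
  · intro j hj v h1 h2 h3 hs
    rw [hfx, hfy, hfz] at hs
    have h6 : (6:P3) * ((v.1*X0 + v.2.1*X1)*(X0^2+X1^2)^2
        + (v.2.1*X1^2 + v.2.2*X2^2)*(X1^3+X2^3)) = 0 := by linear_combination hs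
    have hsyz : (v.1*X0 + v.2.1*X1)*(X0^2+X1^2)^2
        + (v.2.1*X1^2 + v.2.2*X2^2)*(X1^3+X2^3) = 0 := by
      rcases mul_eq_zero.mp h6 with h | h
      · exact absurd h (by norm_num)
      · exact h
    obtain ⟨g, hgh, hg0, hga, hgb, hgc⟩ := main_syz j hj v.1 v.2.1 v.2.2 h1 h2 h3 hsyz
    have hveq : v = g • (X1 * X2 ^ 2, -(X0 * X2 ^ 2), X0 * X1 ^ 2) := by
      have : v = (v.1, v.2.1, v.2.2) := rfl
      rw [this, Prod.smul_mk, Prod.smul_mk, smul_eq_mul, smul_eq_mul, smul_eq_mul]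
      refine congrArg₂ Prod.mk ?_ (congrArg₂ Prod.mk ?_ ?_)
      · rw [hga]
      · rw [hgb]; ring
      · rw [hgc]
    refine ⟨g, ⟨?_, hveq⟩, ?_⟩
    · rcases Nat.lt_or_ge j 3 with h3j | h3j
      · rw [homZ, if_neg (by omega)]
        simp [hg0 h3j]
      · rw [homZ, if_pos (by omega)]
        rw [mem_homogeneousSubmodule]
        convert hgh using 1
        omega
    · rintro g' ⟨-, hg'⟩
      have hcomp : g' * (X1 * X2^2) = g * (X1 * X2^2) := by
        have e1 := congrArg Prod.fst hg'
        have e2 := congrArg Prod.fst hveq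
        simp only [Prod.smul_fst, smul_eq_mul] at e1 e2
        rw [← e1, ← e2]
      exact mul_right_cancel₀ hXwne hcomp
  · rintro ⟨g, hg⟩
    have e2 := congrArg (fun w : P3 × P3 × P3 => w.2.1) hg
    simp only [Prod.smul_snd, Prod.smul_fst, smul_eq_mul] at e2
    have hg0 : g = 0 := by
      rcases mul_eq_zero.mp (show g * (X0 * X2^2) = 0 by linear_combination e2) with h | h
      · exact h
      · exact absurd h (ne_zero_of_eval' ![1,0,1] (by simp))
    have e1 := congrArg Prod.fst hg
    simp only [Prod.smul_fst, smul_eq_mul, hg0, zero_mul] at e1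
    have := congrArg (eval ![(0:ℂ),0,1]) e1
    simp at this

end
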